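/- Let A ≥ 0 and B > 0 be real numbers. Then for every t ≥ 0, ln(1+t) − t + (1+t)·A/(A+B) ≤ ln(1 + A/B), with equality if and only if t = A/B. In particular, the function t ↦ ln(1+t) − t + (1+t)·A/(A+B) on [0,∞) attains its maximum value ln(1 + A/B) uniquely at t = A/B. -/

import Mathlib

/-- Pointwise Lagrangian dual transform: for `A ≥ 0`, `B > 0` and `t ≥ 0`,
`ln(1+t) − t + (1+t)·A/(A+B) ≤ ln(1 + A/B)`, with equality iff `t = A/B`. -/
theorem lagrangian_dual_pointwise (A B : ℝ) (hA : 0 ≤ A) (hB : 0 < B)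
    (t : ℝ) (ht : 0 ≤ t) :
    (Real.log (1 + t) - t + (1 + t) * A / (A + B) ≤ Real.log (1 + A / B)) ∧
      (Real.log (1 + t) - t + (1 + t) * A / (A + B) = Real.log (1 + A / B) ↔ t = A / B) := by
  have hAB : 0 < A + B := by linarith
  have h1t : (0:ℝ) < 1 + t := by linarith
  set x : ℝ := (1 + t) * B / (A + B) with hxdef
  have hx : 0 < x := by positivity
  have hlogx : Real.log x = Real.log (1 + t) - Real.log (1 + A / B) := by
    rw [hxdef, Real.log_div (by positivity) hAB.ne', Real.log_mul h1t.ne' hB.ne']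
    have : 1 + A / B = (A + B) / B := by field_simp; ring
    rw [this, Real.log_div hAB.ne' hB.ne']
    ring
  have harith : x - 1 = t - (1 + t) * A / (A + B) := by
    rw [hxdef]; field_simp; ring
  have hle : Real.log x ≤ x - 1 := Real.log_le_sub_one_of_pos hx
  constructor
  · linarith [hlogx, harith]
  constructor
  · intro heq
    by_contra hne
    have hx1 : x ≠ 1 := by
      intro h1
      apply hne
      have : (1 + t) * B = A + B := by
        rw [hxdef] at h1; field_simp at h1; linarith
      field_simp
      linarith
    have := Real.log_lt_sub_one_of_pos hx hx1
    linarith [hlogx, harith]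
  · intro heq
    have hx1 : x = 1 := by
      rw [hxdef, heq]; field_simp; ring
    have : Real.log x = 0 := by rw [hx1]; exact Real.log_one
    have hxm : x - 1 = 0 := by rw [hx1]; ring
    linarith [hlogx, harith]
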